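/- Let n ≥ 3 and for 1 ≤ k ≤ n−1 let v_k := i·diag(0,…,0,−1,0,…,0,1) ∈ su(n), the diagonal matrix with −i in position k and i in position n. Then Σ_{k=1}^{n−1} Σ_{X,Y ∈ B} σ(v_k, X, Y)·H(X,Y) = −2(n−2)(n−1)(n+2). -/

import Mathlib

open Matrix Finset

/-- The square complex matrices of size `n`. -/
abbrev Mat (n : ℕ) := Matrix (Fin n) (Fin n) ℂ

/-- `T_k = (i/√(k(k+1)))·diag(1,…,1,−k,0,…,0)`, with `k` ones (positions `0,…,k−1` in
0-based indexing, i.e. positions `1,…,k` in the 1-based indexing of the paper) followed by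
`−k`. -/
noncomputable def Tmat (n k : ℕ) : Mat n :=
  (Complex.I / (Real.sqrt (k * (k + 1)) : ℂ)) •
    Matrix.diagonal (fun j : Fin n => if (j : ℕ) < k then 1 else if (j : ℕ) = k then -(k : ℂ) else 0)

/-- `E^r(k,l)`: the matrix with `(p,q)` entry `(1/√2)(δ_{kp}δ_{lq} − δ_{kq}δ_{lp})`. -/
noncomputable def Ermat (n : ℕ) (k l : Fin n) : Mat n :=
  ((Real.sqrt 2 : ℂ))⁻¹ • (Matrix.single k l 1 - Matrix.single l k 1)

/-- `E^c(k,l)`: the matrix with `(p,q)` entry `(i/√2)(δ_{kp}δ_{lq} + δ_{kq}δ_{lp})`. -/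
noncomputable def Ecmat (n : ℕ) (k l : Fin n) : Mat n :=
  (Complex.I / (Real.sqrt 2 : ℂ)) • (Matrix.single k l 1 + Matrix.single l k 1)

/-- The index set for the basis `B` of `su(n)`: `n−1` indices for the `T_k` and two copies
of the set of pairs `k < l` for the `E^r(k,l)` and `E^c(k,l)`. -/
abbrev BIdx (n : ℕ) :=
  Fin (n - 1) ⊕ ({p : Fin n × Fin n // p.1 < p.2} ⊕ {p : Fin n × Fin n // p.1 < p.2})

/-- The family `B = {T_1,…,T_{n−1}} ∪ {E^r(k,l)} ∪ {E^c(k,l)}`. -/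
noncomputable def bmat (n : ℕ) : BIdx n → Mat n
  | Sum.inl k => Tmat n (k + 1)
  | Sum.inr (Sum.inl p) => Ermat n p.1.1 p.1.2
  | Sum.inr (Sum.inr p) => Ecmat n p.1.1 p.1.2

/-- `η = i·diag(1,…,1,−(n−1))`. -/
noncomputable def eta (n : ℕ) : Mat n :=
  Complex.I • Matrix.diagonal (fun j : Fin n => if (j : ℕ) < n - 1 then 1 else -((n : ℂ) - 1))

/-- `H(X,Y) = i·tr(η(XY + YX))`, real-valued on `su(n)`. -/
noncomputable def Hform (n : ℕ) (X Y : Mat n) : ℂ :=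
  Complex.I * (eta n * (X * Y + Y * X)).trace

/-- `σ(X,Y,Z) = i(tr(XYZ) + tr(XZY))`, real-valued on `su(n)`. -/
noncomputable def sigmaC (n : ℕ) (X Y Z : Mat n) : ℂ :=
  Complex.I * ((X * Y * Z).trace + (X * Z * Y).trace)

/-- `v_k`: the diagonal matrix with `−i` in (1-based) position `k` and `i` in position
`n`, i.e. `i·diag(0,…,0,−1,0,…,0,1)`. -/
noncomputable def vmat (n k : ℕ) : Mat n :=
  Matrix.diagonal (fun j : Fin n =>
    if (j : ℕ) = k - 1 then -Complex.I else if (j : ℕ) = n - 1 then Complex.I else 0)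

lemma tele (a : ℕ) (ha : 1 ≤ a) : ∀ n, a ≤ n →
    ∑ m ∈ Finset.Ico a n, ((m:ℂ)*(m+1))⁻¹ = (a:ℂ)⁻¹ - (n:ℂ)⁻¹ := by
  intro n
  induction n with
  | zero => intro h; omega
  | succ n ih =>
    intro h
    rcases eq_or_lt_of_le h with h1 | h1
    · rw [← h1]; simp
    · have han : a ≤ n := by omega
      rw [Finset.sum_Ico_succ_top han, ih han]
      have hn : (n:ℂ) ≠ 0 := Nat.cast_ne_zero.mpr (by omega)
      have hn1 : (n:ℂ) + 1 ≠ 0 := by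
        have : ((n+1:ℕ):ℂ) ≠ 0 := Nat.cast_ne_zero.mpr (by omega)
        push_cast at this; exact this
      push_cast
      field_simp
      ring

noncomputable def eN (m j : ℕ) : ℂ := if j < m then 1 else if j = m then -(m:ℂ) else 0

lemma eN_sum_le (n P R : ℕ) (hR : R < n) (hPR : P ≤ R) :
    ∑ m ∈ Finset.Ico 1 n, eN m P * eN m R * ((m:ℂ)*(m+1))⁻¹
      = (if P = R then 1 else 0) - (n:ℂ)⁻¹ := by
  rcases Nat.eq_zero_or_pos R with hR0 | hR1
  · subst hR0
    have hP0 : P = 0 := le_antisymm hPR (Nat.zero_le _)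
    subst hP0
    rw [if_pos rfl]
    have : ∑ m ∈ Finset.Ico 1 n, eN m 0 * eN m 0 * ((m:ℂ)*(m+1))⁻¹
        = ∑ m ∈ Finset.Ico 1 n, ((m:ℂ)*(m+1))⁻¹ := by
      refine Finset.sum_congr rfl fun m hm => ?_
      simp only [Finset.mem_Ico] at hm
      have : eN m 0 = 1 := by unfold eN; rw [if_pos (by omega)]
      rw [this]; ring
    rw [this, tele 1 le_rfl n (by omega)]
    norm_num
  · -- R ≥ 1
    have h1R : 1 ≤ R := hR1
    rw [← Finset.sum_Ico_consecutive _ (h1R) (le_of_lt hR)]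
    rw [Finset.sum_eq_sum_Ico_succ_bot hR]
    have hz : ∑ m ∈ Finset.Ico 1 R, eN m P * eN m R * ((m:ℂ)*(m+1))⁻¹ = 0 := by
      refine Finset.sum_eq_zero fun m hm => ?_
      simp only [Finset.mem_Ico] at hm
      have : eN m R = 0 := by unfold eN; rw [if_neg (by omega), if_neg (by omega)]
      rw [this]; ring
    have hrest : ∑ m ∈ Finset.Ico (R+1) n, eN m P * eN m R * ((m:ℂ)*(m+1))⁻¹
        = ((R:ℂ)+1)⁻¹ - (n:ℂ)⁻¹ := by
      have : ∑ m ∈ Finset.Ico (R+1) n, eN m P * eN m R * ((m:ℂ)*(m+1))⁻¹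
          = ∑ m ∈ Finset.Ico (R+1) n, ((m:ℂ)*(m+1))⁻¹ := by
        refine Finset.sum_congr rfl fun m hm => ?_
        simp only [Finset.mem_Ico] at hm
        have h1 : eN m P = 1 := by unfold eN; rw [if_pos (by omega)]
        have h2 : eN m R = 1 := by unfold eN; rw [if_pos (by omega)]
        rw [h1, h2]; ring
      rw [this, tele (R+1) (by omega) n (by omega)]
      push_cast; ring
    rw [hz, hrest]
    have hRc : (R:ℂ) ≠ 0 := Nat.cast_ne_zero.mpr (by omega)
    have hR1c : (R:ℂ) + 1 ≠ 0 := by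
      have : ((R+1:ℕ):ℂ) ≠ 0 := Nat.cast_ne_zero.mpr (by omega)
      push_cast at this; exact this
    have heRR : eN R R = -(R:ℂ) := by unfold eN; rw [if_neg (by omega), if_pos rfl]
    rcases eq_or_lt_of_le hPR with hPR1 | hPR1
    · subst hPR1
      rw [if_pos rfl, heRR]
      field_simp
      ring
    · rw [if_neg (by omega), heRR]
      have : eN R P = 1 := by unfold eN; rw [if_pos hPR1]
      rw [this]
      have hnc : (n:ℂ) ≠ 0 := Nat.cast_ne_zero.mpr (by omega)
      field_simp
      ring

lemma eN_sum (n P R : ℕ) (hP : P < n) (hR : R < n) :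
    ∑ m ∈ Finset.Ico 1 n, eN m P * eN m R * ((m:ℂ)*(m+1))⁻¹
      = (if P = R then 1 else 0) - (n:ℂ)⁻¹ := by
  rcases le_total P R with h | h
  · exact eN_sum_le n P R hR h
  · have h2 := eN_sum_le n R P hP h
    have h3 : ∑ m ∈ Finset.Ico 1 n, eN m P * eN m R * ((m:ℂ)*(m+1))⁻¹
        = ∑ m ∈ Finset.Ico 1 n, eN m R * eN m P * ((m:ℂ)*(m+1))⁻¹ := by
      refine Finset.sum_congr rfl fun m _ => by ring
    rw [h3, h2]
    by_cases hpr : P = R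
    · rw [if_pos hpr, if_pos hpr.symm]
    · rw [if_neg hpr, if_neg (fun hh => hpr hh.symm)]

lemma tmat_apply (n m : ℕ) (p q : Fin n) :
    Tmat n m p q = if p = q then (Complex.I / (Real.sqrt (m * (m + 1)) : ℂ)) * eN m (p:ℕ) else 0 := by
  unfold Tmat eN
  rcases eq_or_ne p q with h | h
  · subst h
    simp [Matrix.diagonal_apply_eq, mul_comm]
  · simp [Matrix.diagonal_apply_ne _ h, h]

lemma tmat_prod (n m : ℕ) (hm : 1 ≤ m) (p r : Fin n) :
    Tmat n m p p * Tmat n m r r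
      = -(eN m (p:ℕ) * eN m (r:ℕ) * ((m:ℂ)*((m:ℂ)+1))⁻¹) := by
  rw [tmat_apply, tmat_apply, if_pos rfl, if_pos rfl]
  set c : ℂ := ((Real.sqrt (m * (m + 1)) : ℝ) : ℂ) with hcdef
  have hcc : c * c = (m:ℂ)*((m:ℂ)+1) := by
    rw [hcdef, ← Complex.ofReal_mul, Real.mul_self_sqrt (by positivity)]
    push_cast; ring
  have hmne : (m:ℂ)*((m:ℂ)+1) ≠ 0 := by
    have h1 : (m:ℂ) ≠ 0 := Nat.cast_ne_zero.mpr (by omega)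
    have h2 : (m:ℂ)+1 ≠ 0 := by
      have : ((m+1:ℕ):ℂ) ≠ 0 := Nat.cast_ne_zero.mpr (by omega)
      push_cast at this; exact this
    exact mul_ne_zero h1 h2
  have hcne : c ≠ 0 := by
    intro h0; rw [h0, mul_zero] at hcc; exact hmne hcc.symm
  have expand : Complex.I / c * eN m (p:ℕ) * (Complex.I / c * eN m (r:ℕ))
      = (Complex.I * Complex.I) * (eN m (p:ℕ) * eN m (r:ℕ)) / (c * c) := by
    field_simp
  rw [expand, Complex.I_mul_I, hcc]
  ring

lemma tdiag (n : ℕ) (p r : Fin n) :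
    ∑ k : Fin (n-1), Tmat n ((k:ℕ)+1) p p * Tmat n ((k:ℕ)+1) r r
      = -(if p = r then 1 else 0) + (n:ℂ)⁻¹ := by
  have h1 : ∀ k : Fin (n-1), Tmat n ((k:ℕ)+1) p p * Tmat n ((k:ℕ)+1) r r
      = -(eN ((k:ℕ)+1) (p:ℕ) * eN ((k:ℕ)+1) (r:ℕ) * ((((k:ℕ)+1:ℕ):ℂ)*((((k:ℕ)+1:ℕ):ℂ)+1))⁻¹) :=
    fun k => tmat_prod n ((k:ℕ)+1) (by omega) p r
  rw [Finset.sum_congr rfl (fun k _ => h1 k)]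
  rw [Finset.sum_neg_distrib]
  have h2 : ∑ k : Fin (n-1), eN ((k:ℕ)+1) (p:ℕ) * eN ((k:ℕ)+1) (r:ℕ) * ((((k:ℕ)+1:ℕ):ℂ)*((((k:ℕ)+1:ℕ):ℂ)+1))⁻¹
      = ∑ m ∈ Finset.Ico 1 n, eN m (p:ℕ) * eN m (r:ℕ) * ((m:ℂ)*((m:ℂ)+1))⁻¹ := by
    rw [Finset.sum_Ico_eq_sum_range]
    rw [Fin.sum_univ_eq_sum_range (fun k => eN (k+1) (p:ℕ) * eN (k+1) (r:ℕ) * (((k+1:ℕ):ℂ)*(((k+1:ℕ):ℂ)+1))⁻¹)]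
    refine Finset.sum_congr rfl fun i _ => by rw [Nat.add_comm 1 i]
  rw [h2, eN_sum n (p:ℕ) (r:ℕ) p.isLt r.isLt]
  have : (if (p:ℕ) = (r:ℕ) then (1:ℂ) else 0) = (if p = r then 1 else 0) := by
    simp [Fin.ext_iff]
  rw [this]
  ring

lemma std_apply (n : ℕ) (k l p q : Fin n) :
    Matrix.single k l (1:ℂ) p q = if k = p ∧ l = q then 1 else 0 := by
  unfold Matrix.single
  rfl

lemma e_pair (n : ℕ) (k l p q r s : Fin n) :
    Ermat n k l p q * Ermat n k l r s + Ecmat n k l p q * Ecmat n k l r s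
      = -((if k = p ∧ l = q then (1:ℂ) else 0) * (if l = r ∧ k = s then 1 else 0)
          + (if l = p ∧ k = q then (1:ℂ) else 0) * (if k = r ∧ l = s then 1 else 0)) := by
  have h2 : ((Real.sqrt 2 : ℝ) : ℂ) * ((Real.sqrt 2 : ℝ) : ℂ) = 2 := by
    rw [← Complex.ofReal_mul, Real.mul_self_sqrt (by norm_num)]
    norm_num
  have h2ne : ((Real.sqrt 2 : ℝ) : ℂ) ≠ 0 := by
    intro h0; rw [h0, mul_zero] at h2; norm_num at h2
  set A := (if k = p ∧ l = q then (1:ℂ) else 0)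
  set B := (if l = p ∧ k = q then (1:ℂ) else 0)
  set C := (if k = r ∧ l = s then (1:ℂ) else 0)
  set D := (if l = r ∧ k = s then (1:ℂ) else 0)
  have hEr1 : Ermat n k l p q = ((Real.sqrt 2 : ℝ) : ℂ)⁻¹ * (A - B) := by
    unfold Ermat; simp [Matrix.smul_apply, std_apply, Matrix.sub_apply]; rfl
  have hEr2 : Ermat n k l r s = ((Real.sqrt 2 : ℝ) : ℂ)⁻¹ * (C - D) := by
    unfold Ermat; simp [Matrix.smul_apply, std_apply, Matrix.sub_apply]; rfl
  have hEc1 : Ecmat n k l p q = (Complex.I / ((Real.sqrt 2 : ℝ) : ℂ)) * (A + B) := by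
    unfold Ecmat; simp [Matrix.smul_apply, std_apply, Matrix.add_apply]; rfl
  have hEc2 : Ecmat n k l r s = (Complex.I / ((Real.sqrt 2 : ℝ) : ℂ)) * (C + D) := by
    unfold Ecmat; simp [Matrix.smul_apply, std_apply, Matrix.add_apply]; rfl
  rw [hEr1, hEr2, hEc1, hEc2]
  set u := ((Real.sqrt 2 : ℝ) : ℂ)⁻¹ with hu0
  have hu : u * u = 1/2 := by
    rw [hu0, ← mul_inv, h2]; norm_num
  have hIu : (Complex.I * u) * (Complex.I * u) = -(1/2) := by
    have : (Complex.I * u) * (Complex.I * u) = (Complex.I * Complex.I) * (u * u) := by ring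
    rw [this, Complex.I_mul_I, hu]; ring
  rw [div_eq_mul_inv]
  linear_combination ((A-B)*(C-D))*hu + ((A+B)*(C+D))*hIu

lemma off_sum (n : ℕ) (p q r s : Fin n) :
    ∑ x : {y : Fin n × Fin n // y.1 < y.2},
      (Ermat n x.1.1 x.1.2 p q * Ermat n x.1.1 x.1.2 r s
        + Ecmat n x.1.1 x.1.2 p q * Ecmat n x.1.1 x.1.2 r s)
      = -(if p = s ∧ q = r ∧ p ≠ q then 1 else 0) := by
  rw [Finset.sum_congr rfl (fun x _ => e_pair n x.1.1 x.1.2 p q r s)]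
  have h1 : ∑ x : {y : Fin n × Fin n // y.1 < y.2},
      (if x.1.1 = p ∧ x.1.2 = q then (1:ℂ) else 0) * (if x.1.2 = r ∧ x.1.1 = s then 1 else 0)
      = if p = s ∧ q = r ∧ p < q then 1 else 0 := by
    by_cases h : p = s ∧ q = r ∧ p < q
    · obtain ⟨hs, hr, hpq⟩ := h
      rw [if_pos ⟨hs, hr, hpq⟩]
      rw [Fintype.sum_eq_single (⟨(p,q), hpq⟩ : {y : Fin n × Fin n // y.1 < y.2})]
      · simp [← hs, ← hr]
      · intro x hx
        by_cases hA : x.1.1 = p ∧ x.1.2 = q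
        · exact absurd (Subtype.ext (Prod.ext hA.1 hA.2)) hx
        · rw [if_neg hA, zero_mul]
    · rw [if_neg h]
      refine Finset.sum_eq_zero fun x _ => ?_
      by_cases hA : x.1.1 = p ∧ x.1.2 = q
      · by_cases hB : x.1.2 = r ∧ x.1.1 = s
        · exact absurd ⟨hA.1 ▸ hB.2, hA.2 ▸ hB.1, hA.1 ▸ hA.2 ▸ x.2⟩ h
        · rw [if_neg hB, mul_zero]
      · rw [if_neg hA, zero_mul]
  have h2 : ∑ x : {y : Fin n × Fin n // y.1 < y.2},
      (if x.1.2 = p ∧ x.1.1 = q then (1:ℂ) else 0) * (if x.1.1 = r ∧ x.1.2 = s then 1 else 0)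
      = if p = s ∧ q = r ∧ q < p then 1 else 0 := by
    by_cases h : p = s ∧ q = r ∧ q < p
    · obtain ⟨hs, hr, hqp⟩ := h
      rw [if_pos ⟨hs, hr, hqp⟩]
      rw [Fintype.sum_eq_single (⟨(q,p), hqp⟩ : {y : Fin n × Fin n // y.1 < y.2})]
      · simp [← hs, ← hr]
      · intro x hx
        by_cases hA : x.1.2 = p ∧ x.1.1 = q
        · exact absurd (Subtype.ext (Prod.ext hA.2 hA.1)) hx
        · rw [if_neg hA, zero_mul]
    · rw [if_neg h]
      refine Finset.sum_eq_zero fun x _ => ?_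
      by_cases hA : x.1.2 = p ∧ x.1.1 = q
      · by_cases hB : x.1.1 = r ∧ x.1.2 = s
        · exact absurd ⟨hA.1 ▸ hB.2, hA.2 ▸ hB.1, hA.2 ▸ hA.1 ▸ x.2⟩ h
        · rw [if_neg hB, mul_zero]
      · rw [if_neg hA, zero_mul]
  rw [Finset.sum_neg_distrib, Finset.sum_add_distrib, h1, h2]
  congr 1
  by_cases hps : p = s
  · by_cases hqr : q = r
    · rcases lt_trichotomy p q with h | h | h
      · rw [if_pos ⟨hps, hqr, h⟩, if_neg (by rintro ⟨-,-,h2⟩; exact absurd h2 (lt_asymm h)),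
          if_pos ⟨hps, hqr, h.ne⟩]; ring
      · rw [if_neg (by rintro ⟨-,-,h2⟩; exact absurd h (ne_of_lt h2)),
          if_neg (by rintro ⟨-,-,h2⟩; exact absurd h (ne_of_gt h2)),
          if_neg (by rintro ⟨-,-,h2⟩; exact h2 h)]; ring
      · rw [if_neg (by rintro ⟨-,-,h2⟩; exact absurd h2 (lt_asymm h)), if_pos ⟨hps, hqr, h⟩,
          if_pos ⟨hps, hqr, h.ne'⟩]; ring
    · rw [if_neg (by tauto), if_neg (by tauto), if_neg (by tauto)]; ring
  · rw [if_neg (by tauto), if_neg (by tauto), if_neg (by tauto)]; ring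

lemma complete (n : ℕ) (p q r s : Fin n) :
    ∑ a : BIdx n, bmat n a p q * bmat n a r s
      = -(if p = s ∧ q = r then 1 else 0) + (if p = q ∧ r = s then (n:ℂ)⁻¹ else 0) := by
  rw [Fintype.sum_sum_type, Fintype.sum_sum_type]
  have hT : ∑ k : Fin (n-1), bmat n (Sum.inl k) p q * bmat n (Sum.inl k) r s
      = if p = q ∧ r = s then -(if p = r then 1 else 0) + (n:ℂ)⁻¹ else 0 := by
    by_cases h : p = q ∧ r = s
    · obtain ⟨h1, h2⟩ := h
      rw [if_pos ⟨h1, h2⟩, ← h1, ← h2] at *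
      exact tdiag n p r
    · rw [if_neg h]
      refine Finset.sum_eq_zero fun k _ => ?_
      show Tmat n ((k:ℕ)+1) p q * Tmat n ((k:ℕ)+1) r s = 0
      rw [tmat_apply, tmat_apply]
      by_cases h1 : p = q
      · have h2 : ¬ r = s := fun h2 => h ⟨h1, h2⟩
        rw [if_neg h2, mul_zero]
      · rw [if_neg h1, zero_mul]
  have hE : (∑ x : {y : Fin n × Fin n // y.1 < y.2}, bmat n (Sum.inr (Sum.inl x)) p q * bmat n (Sum.inr (Sum.inl x)) r s)
      + (∑ x : {y : Fin n × Fin n // y.1 < y.2}, bmat n (Sum.inr (Sum.inr x)) p q * bmat n (Sum.inr (Sum.inr x)) r s)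
      = -(if p = s ∧ q = r ∧ p ≠ q then 1 else 0) := by
    rw [← Finset.sum_add_distrib]
    exact off_sum n p q r s
  rw [hT, hE]
  by_cases hpq : p = q
  · subst hpq
    by_cases hrs : r = s
    · subst hrs
      by_cases hpr : p = r
      · subst hpr; simp
      · have h3 : ¬(p = r ∧ p = r ∧ p ≠ p) := fun h => h.2.2 rfl
        have h4 : ¬(p = r ∧ p = r) := fun h => hpr h.1
        simp only [if_pos (⟨rfl, rfl⟩ : p = p ∧ r = r), if_neg hpr, if_neg h3, if_neg h4]
        ring
    · have h1 : ¬(p = p ∧ r = s) := fun h => hrs h.2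
      have h3 : ¬(p = s ∧ p = r ∧ p ≠ p) := fun h => h.2.2 rfl
      have h4 : ¬(p = s ∧ p = r) := fun h => hrs (h.2.symm.trans h.1)
      simp only [if_neg h1, if_neg h3, if_neg h4]
      simp [hrs]
  · by_cases hps : p = s ∧ q = r
    · obtain ⟨h1, h2⟩ := hps
      subst h1; subst h2
      have h1 : ¬(p = q ∧ q = p) := fun h => hpq h.1
      simp only [if_neg h1, if_pos (⟨rfl, rfl, hpq⟩ : p = p ∧ q = q ∧ p ≠ q),
        if_pos (⟨rfl, rfl⟩ : p = p ∧ q = q)]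
      simp [hpq]
    · have h1 : ¬(p = q ∧ r = s) := fun h => hpq h.1
      have h3 : ¬(p = s ∧ q = r ∧ p ≠ q) := fun h => hps ⟨h.1, h.2.1⟩
      simp only [if_neg h1, if_neg h3, if_neg hps]
      ring

lemma L1 (n : ℕ) (C : Mat n) :
    ∑ a : BIdx n, bmat n a * C * bmat n a
      = (-(Matrix.trace C)) • (1 : Mat n) + (n:ℂ)⁻¹ • C := by
  ext p s
  rw [Matrix.sum_apply]
  have step : ∀ a : BIdx n, (bmat n a * C * bmat n a) p s
      = ∑ r, ∑ q, C q r * (bmat n a p q * bmat n a r s) := by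
    intro a
    rw [Matrix.mul_apply]
    refine Finset.sum_congr rfl fun r _ => ?_
    rw [Matrix.mul_apply, Finset.sum_mul]
    refine Finset.sum_congr rfl fun q _ => by ring
  rw [Finset.sum_congr rfl fun a _ => step a, Finset.sum_comm]
  have h2 : ∀ r : Fin n, ∑ a : BIdx n, ∑ q, C q r * (bmat n a p q * bmat n a r s)
      = ∑ q, C q r * (-(if p = s ∧ q = r then 1 else 0)
          + (if p = q ∧ r = s then (n:ℂ)⁻¹ else 0)) := by
    intro r
    rw [Finset.sum_comm]
    refine Finset.sum_congr rfl fun q _ => ?_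
    rw [← Finset.mul_sum, complete n p q r s]
  rw [Finset.sum_congr rfl fun r _ => h2 r]
  simp only [mul_add, Finset.sum_add_distrib, mul_neg, Finset.sum_neg_distrib,
    Matrix.add_apply, Matrix.smul_apply, Matrix.one_apply, mul_ite, mul_one, mul_zero,
    ite_and, smul_eq_mul]
  by_cases hps : p = s
  · subst hps
    simp [Finset.sum_ite_eq, Finset.sum_ite_eq', Matrix.trace, Matrix.diag, mul_comm]
  · simp [hps, Finset.sum_ite_eq, Finset.sum_ite_eq', mul_comm]

lemma L2 (n : ℕ) (B : Mat n) :
    ∑ a : BIdx n, (Matrix.trace (B * bmat n a)) • bmat n a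
      = -B + ((Matrix.trace B) * (n:ℂ)⁻¹) • (1 : Mat n) := by
  ext x y
  rw [Matrix.sum_apply]
  have step : ∀ a : BIdx n, ((Matrix.trace (B * bmat n a)) • bmat n a) x y
      = ∑ s, ∑ r, B s r * (bmat n a r s * bmat n a x y) := by
    intro a
    rw [Matrix.smul_apply, Matrix.trace, smul_eq_mul, Finset.sum_mul]
    refine Finset.sum_congr rfl fun s _ => ?_
    rw [Matrix.diag_apply, Matrix.mul_apply, Finset.sum_mul]
    refine Finset.sum_congr rfl fun r _ => by ring
  rw [Finset.sum_congr rfl fun a _ => step a, Finset.sum_comm]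
  have h2 : ∀ s : Fin n, ∑ a : BIdx n, ∑ r, B s r * (bmat n a r s * bmat n a x y)
      = ∑ r, B s r * (-(if r = y ∧ s = x then 1 else 0)
          + (if r = s ∧ x = y then (n:ℂ)⁻¹ else 0)) := by
    intro s
    rw [Finset.sum_comm]
    refine Finset.sum_congr rfl fun r _ => ?_
    rw [← Finset.mul_sum, complete n r s x y]
  rw [Finset.sum_congr rfl fun s _ => h2 s]
  simp only [mul_add, Finset.sum_add_distrib, mul_neg, Finset.sum_neg_distrib,
    Matrix.add_apply, Matrix.smul_apply, Matrix.neg_apply, Matrix.one_apply, mul_ite,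
    mul_one, mul_zero, ite_and, smul_eq_mul]
  by_cases hxy : x = y
  · subst hxy
    simp only [Finset.sum_ite_eq, Finset.sum_ite_eq', Matrix.trace, Matrix.diag,
      Finset.sum_mul, if_pos rfl, and_true, if_true, eq_self_iff_true]
    simp [Finset.sum_ite_eq, Finset.sum_ite_eq', Finset.mul_sum, mul_comm]
  · simp [hxy, Finset.sum_ite_eq, Finset.sum_ite_eq', mul_comm]

lemma K1 (n : ℕ) (A B : Mat n) :
    ∑ a : BIdx n, Matrix.trace (A * bmat n a) * Matrix.trace (B * bmat n a)
      = -Matrix.trace (A * B) + Matrix.trace A * Matrix.trace B * (n:ℂ)⁻¹ := by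
  have h1 : ∀ a : BIdx n, Matrix.trace (A * bmat n a) * Matrix.trace (B * bmat n a)
      = Matrix.trace (A * ((Matrix.trace (B * bmat n a)) • bmat n a)) := by
    intro a
    rw [Matrix.mul_smul, Matrix.trace_smul, smul_eq_mul]
    ring
  rw [Finset.sum_congr rfl fun a _ => h1 a, ← Matrix.trace_sum, ← Matrix.mul_sum, L2]
  rw [Matrix.mul_add, Matrix.trace_add, Matrix.mul_smul, Matrix.trace_smul,
    Matrix.mul_one, Matrix.mul_neg, Matrix.trace_neg, smul_eq_mul]
  ring

lemma K2 (n : ℕ) (A B : Mat n) :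
    ∑ a : BIdx n, Matrix.trace (A * bmat n a * B * bmat n a)
      = -(Matrix.trace A * Matrix.trace B) + Matrix.trace (A * B) * (n:ℂ)⁻¹ := by
  have h1 : ∀ a : BIdx n, A * bmat n a * B * bmat n a = A * (bmat n a * B * bmat n a) := by
    intro a; simp only [Matrix.mul_assoc]
  rw [Finset.sum_congr rfl fun a _ => congrArg Matrix.trace (h1 a),
    ← Matrix.trace_sum, ← Matrix.mul_sum, L1]
  rw [Matrix.mul_add, Matrix.trace_add, Matrix.mul_smul, Matrix.trace_smul,
    Matrix.mul_one, Matrix.mul_smul, Matrix.trace_smul, smul_eq_mul, smul_eq_mul]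
  ring

lemma K3 (n : ℕ) (C : Mat n) :
    ∑ a : BIdx n, Matrix.trace (C * (bmat n a * bmat n a))
      = ((n:ℂ)⁻¹ - (n:ℂ)) * Matrix.trace C := by
  have h0 : ∑ a : BIdx n, bmat n a * bmat n a
      = (-(n:ℂ)) • (1 : Mat n) + (n:ℂ)⁻¹ • (1 : Mat n) := by
    have := L1 n (1 : Mat n)
    simp only [Matrix.mul_one, Matrix.trace_one, Fintype.card_fin] at this
    exact this
  have h0' : ∑ a : BIdx n, bmat n a * bmat n a
      = ((n:ℂ)⁻¹ - (n:ℂ)) • (1 : Mat n) := by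
    rw [h0, ← add_smul]; ring_nf
  rw [← Matrix.trace_sum, ← Matrix.mul_sum, h0', Matrix.mul_smul, Matrix.trace_smul,
    Matrix.mul_one, smul_eq_mul]

lemma inner_j (n : ℕ) (v X : Mat n) :
    ∑ j : BIdx n, sigmaC n v X (bmat n j) * Hform n X (bmat n j)
      = Matrix.trace ((v*X + X*v) * (eta n*X + X*(eta n)))
        - Matrix.trace (v*X + X*v) * Matrix.trace ((eta n*X + X*(eta n))) * (n:ℂ)⁻¹ := by
  have h1 : ∀ Y : Mat n, sigmaC n v X Y * Hform n X Y
      = -(Matrix.trace ((v*X + X*v) * Y) * Matrix.trace ((eta n*X + X*(eta n)) * Y)) := by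
    intro Y
    unfold sigmaC Hform
    have e2 : Matrix.trace (v * Y * X) = Matrix.trace ((X*v) * Y) := by
      rw [Matrix.trace_mul_cycle]
    have e3 : Matrix.trace (eta n * (X*Y + Y*X))
        = Matrix.trace ((eta n*X) * Y) + Matrix.trace ((X*(eta n)) * Y) := by
      rw [Matrix.mul_add, Matrix.trace_add]
      congr 1
      · rw [← Matrix.mul_assoc]
      · rw [show eta n * (Y*X) = (eta n*Y)*X from by rw [Matrix.mul_assoc],
          Matrix.trace_mul_cycle]
    rw [e3, show Matrix.trace (v * X * Y) = Matrix.trace ((v*X) * Y) from rfl, e2]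
    rw [Matrix.add_mul, Matrix.trace_add, Matrix.add_mul, Matrix.trace_add]
    linear_combination ((Matrix.trace ((v*X)*Y) + Matrix.trace ((X*v)*Y))
      * (Matrix.trace ((eta n*X)*Y) + Matrix.trace ((X*(eta n))*Y))) * Complex.I_mul_I
  rw [Finset.sum_congr rfl fun j _ => h1 (bmat n j), Finset.sum_neg_distrib, K1]
  ring

lemma inner_full (n : ℕ) (v : Mat n) (htv : Matrix.trace v = 0) :
    ∑ i : BIdx n, ∑ j : BIdx n,
      sigmaC n v (bmat n i) (bmat n j) * Hform n (bmat n i) (bmat n j)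
      = (8 * (n:ℂ)⁻¹ - 2 * (n:ℂ)) * Matrix.trace (v * eta n) := by
  rw [Finset.sum_congr rfl fun i _ => inner_j n v (bmat n i)]
  have hsplit : ∀ X : Mat n,
      Matrix.trace ((v*X + X*v) * (eta n*X + X*(eta n)))
        - Matrix.trace (v*X + X*v) * Matrix.trace ((eta n*X + X*(eta n))) * (n:ℂ)⁻¹
      = Matrix.trace (v*X*(eta n)*X) + Matrix.trace ((eta n)*X*v*X)
        + Matrix.trace ((eta n*v) * (X*X)) + Matrix.trace ((v*eta n) * (X*X))
        - (4*(n:ℂ)⁻¹) * (Matrix.trace (v*X) * Matrix.trace (eta n*X)) := by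
    intro X
    have tA1 : Matrix.trace ((v*X) * (eta n*X)) = Matrix.trace (v*X*(eta n)*X) := by
      rw [← Matrix.mul_assoc]
    have tA2 : Matrix.trace ((v*X) * (X*(eta n))) = Matrix.trace ((eta n*v) * (X*X)) := by
      rw [show (v*X) * (X*(eta n)) = (v*(X*X))*(eta n) from by simp only [Matrix.mul_assoc],
        Matrix.trace_mul_comm,
        show eta n * (v*(X*X)) = (eta n*v)*(X*X) from by simp only [Matrix.mul_assoc]]
    have tA3 : Matrix.trace ((X*v) * (eta n*X)) = Matrix.trace ((v*eta n) * (X*X)) := by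
      rw [Matrix.trace_mul_comm,
        show (eta n*X) * (X*v) = (eta n*(X*(X*v))) from by simp only [Matrix.mul_assoc],
        Matrix.trace_mul_comm,
        show (X*(X*v)) * eta n = (X*(X*(v* eta n))) from by simp only [Matrix.mul_assoc],
        Matrix.trace_mul_comm,
        show (X*(v*eta n)) * X = (X*((v*eta n)*X)) from by simp only [Matrix.mul_assoc],
        Matrix.trace_mul_comm,
        show ((v*eta n)*X) * X = (v*eta n) * (X*X) from by simp only [Matrix.mul_assoc]]
    have tA4 : Matrix.trace ((X*v) * (X*(eta n))) = Matrix.trace ((eta n)*X*v*X) := by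
      rw [show (X*v) * (X*(eta n)) = ((X*v)*X)*(eta n) from by simp only [Matrix.mul_assoc],
        Matrix.trace_mul_comm,
        show eta n * ((X*v)*X) = ((eta n*X)*v)*X from by simp only [Matrix.mul_assoc]]
    have tB1 : Matrix.trace (v*X + X*v) = 2 * Matrix.trace (v*X) := by
      rw [Matrix.trace_add, Matrix.trace_mul_comm X v]; ring
    have tB2 : Matrix.trace (eta n*X + X*(eta n)) = 2 * Matrix.trace (eta n*X) := by
      rw [Matrix.trace_add, Matrix.trace_mul_comm X (eta n)]; ring
    rw [Matrix.add_mul, Matrix.mul_add, Matrix.mul_add, Matrix.trace_add,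
      Matrix.trace_add, Matrix.trace_add, tA1, tA2, tA3, tA4, tB1, tB2]
    ring
  rw [Finset.sum_congr rfl fun i _ => hsplit (bmat n i)]
  rw [Finset.sum_sub_distrib, Finset.sum_add_distrib, Finset.sum_add_distrib,
    Finset.sum_add_distrib, ← Finset.mul_sum]
  rw [K2 n v (eta n), K2 n (eta n) v, K3 n (eta n * v), K3 n (v * eta n), K1 n v (eta n)]
  rw [htv, Matrix.trace_mul_comm (eta n) v]
  ring

lemma trace_vmat (n k : ℕ) (hn : 3 ≤ n) (hk1 : 1 ≤ k) (hk2 : k ≤ n - 1) :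
    Matrix.trace (vmat n k) = 0 := by
  set a : Fin n := ⟨k - 1, by omega⟩
  set b : Fin n := ⟨n - 1, by omega⟩
  have hab : a ≠ b := Fin.ne_of_val_ne (show k - 1 ≠ n - 1 by omega)
  unfold vmat
  rw [Matrix.trace_diagonal]
  have hpt : ∀ j : Fin n,
      (if (j : ℕ) = k - 1 then -Complex.I else if (j : ℕ) = n - 1 then Complex.I else 0)
      = (if j = a then -Complex.I else 0) + (if j = b then Complex.I else 0) := by
    intro j
    by_cases h1 : (j : ℕ) = k - 1
    · have : j = a := Fin.ext h1
      rw [if_pos h1, if_pos this, if_neg (this ▸ hab), add_zero]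
    · have h1' : ¬ j = a := fun h => h1 (by rw [h])
      rw [if_neg h1, if_neg h1']
      by_cases h2 : (j : ℕ) = n - 1
      · rw [if_pos h2, if_pos (Fin.ext h2), zero_add]
      · rw [if_neg h2, if_neg (fun h => h2 (by rw [h])), add_zero]
  rw [Finset.sum_congr rfl fun j _ => hpt j, Finset.sum_add_distrib,
    Finset.sum_ite_eq' Finset.univ a (fun _ => -Complex.I),
    Finset.sum_ite_eq' Finset.univ b (fun _ => Complex.I)]
  simp

lemma trace_vmat_eta (n k : ℕ) (hn : 3 ≤ n) (hk1 : 1 ≤ k) (hk2 : k ≤ n - 1) :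
    Matrix.trace (vmat n k * eta n) = (n : ℂ) := by
  set a : Fin n := ⟨k - 1, by omega⟩
  set b : Fin n := ⟨n - 1, by omega⟩
  have hab : a ≠ b := Fin.ne_of_val_ne (show k - 1 ≠ n - 1 by omega)
  unfold vmat eta
  rw [Matrix.mul_smul, Matrix.diagonal_mul_diagonal, Matrix.trace_smul,
    Matrix.trace_diagonal]
  have hpt : ∀ j : Fin n,
      (if (j : ℕ) = k - 1 then -Complex.I else if (j : ℕ) = n - 1 then Complex.I else 0)
        * (if (j : ℕ) < n - 1 then 1 else -((n : ℂ) - 1))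
      = (if j = a then -Complex.I else 0)
          + (if j = b then -(Complex.I * ((n:ℂ) - 1)) else 0) := by
    intro j
    by_cases h1 : (j : ℕ) = k - 1
    · have hja : j = a := Fin.ext h1
      rw [if_pos h1, if_pos (show (j : ℕ) < n - 1 by omega), if_pos hja,
        if_neg (hja ▸ hab), mul_one, add_zero]
    · have h1' : ¬ j = a := fun h => h1 (by rw [h])
      rw [if_neg h1, if_neg h1', zero_add]
      by_cases h2 : (j : ℕ) = n - 1
      · rw [if_pos h2, if_neg (by omega), if_pos (Fin.ext h2)]
        ring
      · rw [if_neg h2, zero_mul,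
          if_neg (show ¬ j = b from fun h => h2 (by rw [h]))]
  rw [Finset.sum_congr rfl fun j _ => hpt j, Finset.sum_add_distrib,
    Finset.sum_ite_eq' Finset.univ a (fun _ => -Complex.I),
    Finset.sum_ite_eq' Finset.univ b (fun _ => -(Complex.I * ((n:ℂ) - 1)))]
  simp only [Finset.mem_univ, if_true, smul_eq_mul]
  have := Complex.I_mul_I
  linear_combination (-1 - ((n:ℂ) - 1)) * this

/-- `Σ_{k=1}^{n−1} Σ_{X,Y ∈ B} σ(v_k,X,Y)·H(X,Y) = −2(n−2)(n−1)(n+2)`. -/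
theorem sigma_vk_H_contraction (n : ℕ) (hn : 3 ≤ n) :
    ∑ k ∈ Finset.Icc 1 (n - 1), ∑ i : BIdx n, ∑ j : BIdx n,
      sigmaC n (vmat n k) (bmat n i) (bmat n j) * Hform n (bmat n i) (bmat n j) =
      -2 * ((n : ℂ) - 2) * ((n : ℂ) - 1) * ((n : ℂ) + 2) := by
  have hne : (n : ℂ) ≠ 0 := Nat.cast_ne_zero.mpr (by omega)
  have hterm : ∀ k ∈ Finset.Icc 1 (n - 1),
      ∑ i : BIdx n, ∑ j : BIdx n,
        sigmaC n (vmat n k) (bmat n i) (bmat n j) * Hform n (bmat n i) (bmat n j)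
      = (8 * (n:ℂ)⁻¹ - 2 * (n:ℂ)) * (n : ℂ) := by
    intro k hk
    simp only [Finset.mem_Icc] at hk
    rw [inner_full n (vmat n k) (trace_vmat n k hn hk.1 hk.2),
      trace_vmat_eta n k hn hk.1 hk.2]
  rw [Finset.sum_congr rfl hterm, Finset.sum_const, Nat.card_Icc]
  have hcard : (n - 1 + 1 - 1 : ℕ) = n - 1 := by omega
  rw [hcard, nsmul_eq_mul]
  have hcast : ((n - 1 : ℕ) : ℂ) = (n : ℂ) - 1 := by
    push_cast [Nat.cast_sub (by omega : 1 ≤ n)]; ring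
  rw [hcast]
  field_simp
  ring
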